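/- arXiv:1403.2220 — 2 statements merged into one kernel-verified Lean document; each statement's English description precedes it below -/
import Mathlib

section
/- Let u be a positive radial solution of Δu + λu = 0 in the ball B_R ⊂ ℝⁿ with Robin boundary condition ∂_ν u + αu = 0 on ∂B_R, where α > 0 and λ > 0. Then −α² + ((n−1)/R)α − λ ≤ 0. -/
open Set Filter Topology

theorem radial_robin_eigenfunction_sign (n : ℕ) (hn : 2 ≤ n)
    (R α lam : ℝ) (hR : 0 < R) (hα : 0 < α) (hlam : 0 < lam)
    (u : ℝ → ℝ) (hu : ContDiffOn ℝ 2 u (Set.Icc 0 R))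
    (hpos : ∀ r ∈ Set.Icc (0 : ℝ) R, 0 < u r)
    (hode : ∀ r ∈ Set.Ioo (0 : ℝ) R,
      deriv (deriv u) r + ((n : ℝ) - 1) / r * deriv u r + lam * u r = 0)
    (h0 : deriv u 0 = 0)
    (hRobin : deriv u R + α * u R = 0) :
    -α ^ 2 + ((n : ℝ) - 1) / R * α - lam ≤ 0 := by
  have hn1 : (1 : ℝ) ≤ (n : ℝ) - 1 := by
    have : (2 : ℝ) ≤ (n : ℝ) := by exact_mod_cast hn
    linarith
  have hn1' : ((n : ℝ) - 1) ≠ 0 := by linarith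
  set g : ℝ → ℝ := derivWithin u (Set.Icc 0 R) with hg_def
  set h2 : ℝ → ℝ := derivWithin g (Set.Icc 0 R) with hh2_def
  have hIcc : UniqueDiffOn ℝ (Set.Icc (0:ℝ) R) := uniqueDiffOn_Icc hR
  have hg1 : ContDiffOn ℝ 1 g (Set.Icc 0 R) :=
    hu.derivWithin hIcc (by norm_num)
  have hgc : ContinuousOn g (Set.Icc 0 R) := hg1.continuousOn
  have hh2cd : ContDiffOn ℝ 0 h2 (Set.Icc 0 R) := hg1.derivWithin hIcc (by norm_num)
  have hh2c : ContinuousOn h2 (Set.Icc 0 R) := hh2cd.continuousOn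
  have hmem : ∀ r ∈ Set.Ioo (0:ℝ) R, Set.Icc (0:ℝ) R ∈ 𝓝 r :=
    fun r hr => Icc_mem_nhds hr.1 hr.2
  have hu' : ∀ r ∈ Set.Ioo (0:ℝ) R, HasDerivAt u (g r) r := by
    intro r hr
    have hd : DifferentiableAt ℝ u r :=
      ((hu.differentiableOn (by norm_num)) r (Set.Ioo_subset_Icc_self hr)).differentiableAt
        (hmem r hr)
    have : g r = deriv u r := derivWithin_of_mem_nhds (hmem r hr)
    rw [this]
    exact hd.hasDerivAt
  have hgd : ∀ r ∈ Set.Ioo (0:ℝ) R, g r = deriv u r :=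
    fun r hr => derivWithin_of_mem_nhds (hmem r hr)
  have hg' : ∀ r ∈ Set.Ioo (0:ℝ) R, HasDerivAt g (h2 r) r := by
    intro r hr
    have hd : DifferentiableAt ℝ g r :=
      ((hg1.differentiableOn (by norm_num)) r (Set.Ioo_subset_Icc_self hr)).differentiableAt
        (hmem r hr)
    have : h2 r = deriv g r := derivWithin_of_mem_nhds (hmem r hr)
    rw [this]
    exact hd.hasDerivAt
  have hh2eq : ∀ r ∈ Set.Ioo (0:ℝ) R, h2 r = deriv (deriv u) r := by
    intro r hr
    have h1 : h2 r = deriv g r := derivWithin_of_mem_nhds (hmem r hr)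
    have h2' : deriv g r = deriv (deriv u) r := by
      apply Filter.EventuallyEq.deriv_eq
      filter_upwards [Ioo_mem_nhds hr.1 hr.2] with y hy
      exact hgd y hy
    rw [h1, h2']
  have hodeg : ∀ r ∈ Set.Ioo (0:ℝ) R,
      h2 r + ((n : ℝ) - 1) / r * g r + lam * u r = 0 := by
    intro r hr
    rw [hh2eq r hr, hgd r hr]
    exact hode r hr
  -- boundary value of g at R
  have hRmem : R ∈ Set.Icc (0:ℝ) R := Set.right_mem_Icc.2 hR.le
  have h0mem : (0:ℝ) ∈ Set.Icc (0:ℝ) R := Set.left_mem_Icc.2 hR.le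
  have hgR : g R = -(α * u R) := by
    by_cases hd : DifferentiableAt ℝ u R
    · have : g R = deriv u R := hd.derivWithin (hIcc R hRmem)
      rw [this]; linarith
    · exfalso
      rw [deriv_zero_of_not_differentiableAt hd] at hRobin
      have := hpos R hRmem
      nlinarith
  -- g 0 = 0
  have hne : (𝓝[Set.Ioo (0:ℝ) R] 0).NeBot := by
    rw [← mem_closure_iff_nhdsWithin_neBot, closure_Ioo hR.ne]
    exact h0mem
  have hg0 : g 0 = 0 := by
    have t1 : Tendsto g (𝓝[Set.Ioo (0:ℝ) R] 0) (𝓝 (g 0)) :=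
      ((hgc 0 h0mem).mono Set.Ioo_subset_Icc_self).tendsto
    have t2 : Tendsto (fun r => -(r / ((n:ℝ) - 1)) * (h2 r + lam * u r))
        (𝓝[Set.Ioo (0:ℝ) R] 0)
        (𝓝 (-((0:ℝ) / ((n:ℝ) - 1)) * (h2 0 + lam * u 0))) := by
      have hc : ContinuousWithinAt (fun r => -(r / ((n:ℝ) - 1)) * (h2 r + lam * u r))
          (Set.Icc 0 R) 0 := by
        exact ((continuousWithinAt_id.div_const _).neg).mul
          ((hh2c 0 h0mem).add (continuousWithinAt_const.mul (hu.continuousOn 0 h0mem)))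
      exact (hc.mono Set.Ioo_subset_Icc_self).tendsto
    have heq : ∀ᶠ r in 𝓝[Set.Ioo (0:ℝ) R] 0,
        g r = -(r / ((n:ℝ) - 1)) * (h2 r + lam * u r) := by
      filter_upwards [self_mem_nhdsWithin] with r hr
      have h := hodeg r hr
      have hr0 : r ≠ 0 := ne_of_gt hr.1
      field_simp at h ⊢
      linarith
    have t2' : Tendsto g (𝓝[Set.Ioo (0:ℝ) R] 0)
        (𝓝 (-((0:ℝ) / ((n:ℝ) - 1)) * (h2 0 + lam * u 0))) :=
      t2.congr' (heq.mono fun r hr => hr.symm)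
    have := tendsto_nhds_unique t1 t2'
    rw [this]; simp
  -- the Riccati variable
  set z : ℝ → ℝ := fun r => g r / u r with hz_def
  have hzc : ContinuousOn z (Set.Icc 0 R) :=
    hgc.div hu.continuousOn (fun r hr => (hpos r hr).ne')
  have hz0 : z 0 = 0 := by simp [hz_def, hg0]
  have huR : u R > 0 := hpos R hRmem
  have hzR : z R = -α := by
    simp only [hz_def, hgR]
    field_simp
  set w : ℝ → ℝ := fun r => -(z r)^2 - ((n:ℝ) - 1) / r * z r - lam with hw_def
  have hz' : ∀ r ∈ Set.Ioo (0:ℝ) R, HasDerivAt z (w r) r := by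
    intro r hr
    have hur : u r ≠ 0 := (hpos r (Set.Ioo_subset_Icc_self hr)).ne'
    have hdz : HasDerivAt z ((h2 r * u r - g r * g r) / (u r)^2) r :=
      (hg' r hr).div (hu' r hr) hur
    have hval : (h2 r * u r - g r * g r) / (u r)^2 = w r := by
      have h := hodeg r hr
      have hh : h2 r = -(((n:ℝ) - 1) / r * g r) - lam * u r := by linarith
      rw [hh]
      simp only [hw_def, hz_def]
      have hrne : r ≠ 0 := ne_of_gt hr.1
      field_simp
      ring
    rwa [hval] at hdz
  -- main argument by contradiction
  by_contra hQ
  push_neg at hQ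
  -- w is positive near R
  have hwR : w R = -α ^ 2 + ((n : ℝ) - 1) / R * α - lam := by
    simp only [hw_def, hzR]
    ring
  have hwc : ContinuousWithinAt w (Set.Icc 0 R) R := by
    exact (((hzc R hRmem).pow 2).neg.sub
      ((continuousWithinAt_const.div continuousWithinAt_id hR.ne').mul (hzc R hRmem))).sub
      continuousWithinAt_const
  have hev : ∀ᶠ r in 𝓝[Set.Icc (0:ℝ) R] R, 0 < w r := by
    apply hwc.tendsto.eventually
    rw [hwR]
    exact eventually_gt_nhds hQ
  obtain ⟨ε, hε, hball⟩ := Metric.mem_nhdsWithin_iff.1 hev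
  set b : ℝ := max (R - ε/2) (R/2) with hb_def
  have hbpos : 0 < b := lt_of_lt_of_le (by linarith) (le_max_right _ _)
  have hbR : b < R := by
    apply max_lt <;> linarith
  have hwpos : ∀ r ∈ Set.Ioo b R, 0 < w r := by
    intro r hr
    apply hball
    constructor
    · rw [Metric.mem_ball, Real.dist_eq, abs_lt]
      have h1 : R - ε/2 ≤ b := le_max_left _ _
      constructor <;> [linarith [hr.1, hr.2]; linarith [hr.2]]
    · exact ⟨le_of_lt (lt_trans hbpos hr.1), hr.2.le⟩
  -- z is strictly monotone on [b, R], hence z b < z R = -α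
  have hsub : Set.Icc b R ⊆ Set.Icc (0:ℝ) R :=
    Set.Icc_subset_Icc hbpos.le le_rfl
  have hmono : StrictMonoOn z (Set.Icc b R) := by
    apply strictMonoOn_of_deriv_pos (convex_Icc b R) (hzc.mono hsub)
    intro r hr
    rw [interior_Icc] at hr
    have hr' : r ∈ Set.Ioo (0:ℝ) R := ⟨lt_trans hbpos hr.1, hr.2⟩
    rw [(hz' r hr').deriv]
    exact hwpos r hr
  have hzb : z b < -α := by
    have := hmono (Set.left_mem_Icc.2 hbR.le) (Set.right_mem_Icc.2 hbR.le) hbR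
    rwa [hzR] at this
  -- the first point where z hits -α
  have hzcb : ContinuousOn z (Set.Icc 0 b) :=
    hzc.mono (Set.Icc_subset_Icc le_rfl hbR.le)
  have hS : ∃ c ∈ Set.Icc (0:ℝ) b, z c = -α := by
    have := intermediate_value_Icc' hbpos.le hzcb
    have hmem' : -α ∈ Set.Icc (z b) (z 0) := by
      rw [hz0]; exact ⟨hzb.le, by linarith⟩
    obtain ⟨c, hc, hc'⟩ := this hmem'
    exact ⟨c, hc, hc'⟩
  set S : Set ℝ := Set.Icc 0 b ∩ z ⁻¹' {-α} with hS_def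
  have hSne : S.Nonempty := by
    obtain ⟨c, hc, hc'⟩ := hS
    exact ⟨c, hc, by simpa using hc'⟩
  have hSclosed : IsClosed S :=
    hzcb.preimage_isClosed_of_isClosed isClosed_Icc isClosed_singleton
  have hSbdd : BddBelow S := ⟨0, fun x hx => hx.1.1⟩
  set r0 : ℝ := sInf S with hr0_def
  have hr0S : r0 ∈ S := hSclosed.csInf_mem hSne hSbdd
  have hr0z : z r0 = -α := by simpa using hr0S.2
  have hr0b : r0 ∈ Set.Icc (0:ℝ) b := hr0S.1
  have hr0pos : 0 < r0 := by
    rcases lt_or_eq_of_le hr0b.1 with h | h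
    · exact h
    · exfalso; rw [← h] at hr0z; rw [hz0] at hr0z; linarith
  have hr0R : r0 < R := lt_of_le_of_lt hr0b.2 hbR
  have hr0Ioo : r0 ∈ Set.Ioo (0:ℝ) R := ⟨hr0pos, hr0R⟩
  -- z ≥ -α on [0, r0]
  have hminOn : IsMinOn z (Set.Icc 0 r0) r0 := by
    intro r hr
    simp only [Set.mem_setOf_eq, hr0z]
    by_contra hlt
    push_neg at hlt
    have hr' : r ∈ Set.Icc (0:ℝ) r0 := hr
    have hrr0 : r < r0 := by
      rcases lt_or_eq_of_le hr'.2 with h | h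
      · exact h
      · exfalso; rw [h, hr0z] at hlt; linarith
    have hzcr : ContinuousOn z (Set.Icc 0 r) :=
      hzcb.mono (Set.Icc_subset_Icc le_rfl (hrr0.le.trans hr0b.2))
    have := intermediate_value_Icc' hr'.1 hzcr
    have hmem' : -α ∈ Set.Icc (z r) (z 0) := by
      rw [hz0]; exact ⟨hlt.le, by linarith⟩
    obtain ⟨c, hc, hc'⟩ := this hmem'
    have hcS : c ∈ S := ⟨⟨hc.1, hc.2.trans (hrr0.le.trans hr0b.2)⟩, by simpa using hc'⟩
    have : r0 ≤ c := csInf_le hSbdd hcS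
    linarith [hc.2]
  -- Fermat at the right endpoint: w r0 ≤ 0
  have hw0 : w r0 ≤ 0 := by
    have hF : HasFDerivWithinAt z
        (ContinuousLinearMap.smulRight (1 : ℝ →L[ℝ] ℝ) (w r0)) (Set.Icc 0 r0) r0 :=
      (hz' r0 hr0Ioo).hasFDerivAt.hasFDerivWithinAt
    have hy : -r0 ∈ posTangentConeAt (Set.Icc (0:ℝ) r0) r0 := by
      apply mem_posTangentConeAt_of_segment_subset
      rw [add_neg_cancel, segment_symm, segment_eq_Icc hr0pos.le]
    have h := hminOn.localize.hasFDerivWithinAt_nonneg hF hy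
    simp only [ContinuousLinearMap.smulRight_apply, ContinuousLinearMap.one_apply,
      smul_eq_mul] at h
    nlinarith
  -- contradiction
  have hle : ((n : ℝ) - 1) / R ≤ ((n : ℝ) - 1) / r0 :=
    div_le_div_of_nonneg_left (by linarith) hr0pos (hr0R.le)
  have hwval : w r0 = -α ^ 2 + ((n : ℝ) - 1) / r0 * α - lam := by
    simp only [hw_def, hr0z]; ring
  have hmul := mul_le_mul_of_nonneg_right hle hα.le
  rw [hwval] at hw0
  linarith
end

section
/- Let z : [0,R] → ℝ be C¹ with z(0) = 0, z(R) = −α for some α > 0, satisfying z'(r) + z(r)² + ((n−1)/r) z(r) + λ = 0 on (0,R] with λ > 0 and n ≥ 2. Then z'(R) ≤ 0, i.e. α² − ((n−1)/R)α + λ ≥ 0. -/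
open Set Filter Topology

theorem riccati_endpoint_sign (n : ℕ) (hn : 2 ≤ n)
    (R α lam : ℝ) (hR : 0 < R) (hα : 0 < α) (hlam : 0 < lam)
    (z : ℝ → ℝ) (hz : ContDiffOn ℝ 1 z (Set.Icc 0 R))
    (h0 : z 0 = 0) (hRv : z R = -α)
    (hode : ∀ r ∈ Set.Ioc (0 : ℝ) R,
      deriv z r + (z r) ^ 2 + ((n : ℝ) - 1) / r * z r + lam = 0) :
    deriv z R ≤ 0 ∧ α ^ 2 - ((n : ℝ) - 1) / R * α + lam ≥ 0 := by
  have hcont : ContinuousOn z (Set.Icc 0 R) := hz.continuousOn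
  have hodeR := hode R ⟨hR, le_rfl⟩
  rw [hRv] at hodeR
  have key : α ^ 2 - ((n : ℝ) - 1) / R * α + lam ≥ 0 := by
    by_contra hQ
    push_neg at hQ
    -- hQ : α ^ 2 - ((n-1)/R)*α + lam < 0
    set S : Set ℝ := {r ∈ Set.Icc 0 R | z r = -α} with hS
    have hSne : S.Nonempty := ⟨R, ⟨hR.le, le_rfl⟩, hRv⟩
    have hSbdd : BddBelow S := ⟨0, fun r hr => hr.1.1⟩
    have hSclosed : IsClosed S := by
      have : S = Set.Icc 0 R ∩ z ⁻¹' {-α} := by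
        ext r; simp [hS, Set.mem_sep_iff]
      rw [this]
      exact hcont.preimage_isClosed_of_isClosed isClosed_Icc isClosed_singleton
    set r0 := sInf S with hr0def
    have hr0S : r0 ∈ S := hSclosed.csInf_mem hSne hSbdd
    have hr0R : r0 ≤ R := csInf_le hSbdd ⟨⟨hR.le, le_rfl⟩, hRv⟩
    have hr0pos : 0 < r0 := by
      rcases lt_or_eq_of_le hr0S.1.1 with h | h
      · exact h
      · exfalso
        have := hr0S.2
        rw [← h, h0] at this
        linarith
    -- z r > -α for r ∈ [0, r0)
    have hgt : ∀ r ∈ Set.Ico (0:ℝ) r0, -α < z r := by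
      intro r hr
      by_contra hle
      push_neg at hle
      rcases lt_or_eq_of_le hle with hlt | heq
      · -- z r < -α, IVT on [0, r] gives point in S below r0
        have hrR : r ≤ R := hr.2.le.trans hr0R
        have hivt := intermediate_value_Icc' hr.1 (hcont.mono (Set.Icc_subset_Icc le_rfl hrR))
        have hmem : -α ∈ Set.Icc (z r) (z 0) := by
          rw [h0]; exact ⟨hlt.le, by linarith⟩
        obtain ⟨c, hc, hzc⟩ := hivt hmem
        have hcS : c ∈ S := ⟨⟨hc.1, hc.2.trans hrR⟩, hzc⟩
        have : r0 ≤ c := csInf_le hSbdd hcS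
        have : c ≤ r := hc.2
        linarith [hr.2]
      · have hcS : r ∈ S := ⟨⟨hr.1, hr.2.le.trans hr0R⟩, heq⟩
        have := csInf_le hSbdd hcS
        linarith [hr.2]
    -- deriv z r0 ≤ 0
    have hderiv_le : deriv z r0 ≤ 0 := by
      by_cases hdiff : DifferentiableAt ℝ z r0
      · have hd : HasDerivAt z (deriv z r0) r0 := hdiff.hasDerivAt
        have hdw : HasDerivWithinAt z (deriv z r0) (Set.Iic r0) r0 := hd.hasDerivWithinAt
        have htend := hasDerivWithinAt_iff_tendsto_slope.mp hdw
        have hsub : Set.Ico (0:ℝ) r0 ⊆ Set.Iic r0 \ {r0} := by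
          intro x hx
          exact ⟨hx.2.le, fun hx' => absurd (hx' ▸ hx.2) (lt_irrefl _)⟩
        have hne : (𝓝[Set.Ico (0:ℝ) r0] r0).NeBot := by
          apply mem_closure_iff_nhdsWithin_neBot.mp
          rw [closure_Ico (ne_of_lt hr0pos)]
          exact ⟨hr0pos.le, le_rfl⟩
        have htend' : Tendsto (slope z r0) (𝓝[Set.Ico (0:ℝ) r0] r0) (𝓝 (deriv z r0)) :=
          htend.mono_left (nhdsWithin_mono _ hsub)
        refine le_of_tendsto htend' ?_
        filter_upwards [self_mem_nhdsWithin] with x hx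
        have h1 : z r0 < z x := by rw [hr0S.2]; exact hgt x hx
        have h2 : x - r0 < 0 := by linarith [hx.2]
        rw [slope_def_field]
        exact div_nonpos_of_nonneg_of_nonpos (by linarith) (by linarith)
      · rw [deriv_zero_of_not_differentiableAt hdiff]
    -- ODE at r0 gives deriv z r0 > 0
    have hode0 := hode r0 ⟨hr0pos, hr0R⟩
    rw [hr0S.2] at hode0
    have hfrac : ((n : ℝ) - 1) / R ≤ ((n : ℝ) - 1) / r0 := by
      apply div_le_div_of_nonneg_left _ hr0pos hr0R
      have : (2:ℝ) ≤ (n:ℝ) := by exact_mod_cast hn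
      linarith
    have hmul : ((n : ℝ) - 1) / R * α ≤ ((n : ℝ) - 1) / r0 * α :=
      mul_le_mul_of_nonneg_right hfrac hα.le
    nlinarith [hode0, hderiv_le]
  refine ⟨?_, key⟩
  nlinarith [hodeR]
end
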